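/- For n ≥ 2, a ∈ (1,12), and z ∈ ℂⁿ with max_j |z_j| < n^{-6}: the inequality 6·log(|z_1|² + ... + |z_n|²) - 6n ≤ log max(|z_1|, ..., |z_{n-1}|, |z_n|^a) holds. -/

import Mathlib

open scoped BigOperators

/-- For z with max_j |z_j| < n^{-6}:
6 log(∑|z_j|²) - 6n ≤ log max(|z_1|,…,|z_{n-1}|, |z_n|^a), n ≥ 2, 1 < a < 12. -/
theorem stmt8 (n : ℕ) (hn : 2 ≤ n) (a : ℝ) (ha1 : 1 < a) (ha2 : a < 12)
    (z : Fin n → ℂ)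
    (hz : (⨆ j : Fin n, ‖z j‖) < ((n : ℝ) ^ 6)⁻¹) :
    6 * Real.log (∑ j : Fin n, ‖z j‖ ^ 2) - 6 * n ≤
      Real.log (max (⨆ i : {i : Fin n // (i : ℕ) < n - 1}, ‖z i.1‖)
        (‖z ⟨n - 1, by omega⟩‖ ^ a)) := by
  have hnpos : (0:ℝ) < n := by positivity
  have hne : Nonempty (Fin n) := ⟨⟨0, by omega⟩⟩
  have hsub_ne : Nonempty {i : Fin n // (i : ℕ) < n - 1} :=
    ⟨⟨⟨0, by omega⟩, show (0:ℕ) < n - 1 by omega⟩⟩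
  by_cases hz0 : ∀ j, z j = 0
  · have h1 : (∑ j : Fin n, ‖z j‖ ^ 2) = 0 := by simp [hz0]
    have h2 : (⨆ i : {i : Fin n // (i : ℕ) < n - 1}, ‖z i.1‖) = 0 := by
      simp [hz0]
    have h3 : ‖z ⟨n - 1, by omega⟩‖ ^ a = 0 := by
      rw [hz0]
      simp [Real.zero_rpow (by linarith : a ≠ 0)]
    rw [h1, h2, h3]
    simp [Real.log_zero]
  · push_neg at hz0
    obtain ⟨j1, hj1⟩ := hz0
    set M := ⨆ j : Fin n, ‖z j‖ with hMdef
    have hbdd : BddAbove (Set.range fun j : Fin n => ‖z j‖) :=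
      Set.Finite.bddAbove (Set.finite_range _)
    have hMle : ∀ j, ‖z j‖ ≤ M := fun j => le_ciSup hbdd j
    have hMpos : 0 < M :=
      lt_of_lt_of_le (norm_pos_iff.mpr hj1) (hMle j1)
    have hM1 : M < 1 := by
      have h6 : (1:ℝ) ≤ (n:ℝ) ^ 6 := one_le_pow₀ (by exact_mod_cast Nat.one_le_of_lt hn)
      calc M < ((n : ℝ) ^ 6)⁻¹ := hz
        _ ≤ 1 := inv_le_one_of_one_le₀ h6
    have hlogM : Real.log M < 0 := Real.log_neg hMpos hM1
    -- sum bound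
    have hsum_le : (∑ j : Fin n, ‖z j‖ ^ 2) ≤ n * M ^ 2 := by
      calc (∑ j : Fin n, ‖z j‖ ^ 2)
          ≤ ∑ _j : Fin n, M ^ 2 :=
            Finset.sum_le_sum fun j _ =>
              pow_le_pow_left₀ (norm_nonneg _) (hMle j) 2
        _ = n * M ^ 2 := by simp [Finset.sum_const, mul_comm]
    have hsum_pos : 0 < ∑ j : Fin n, ‖z j‖ ^ 2 := by
      have h1 : 0 < ‖z j1‖ ^ 2 := pow_pos (norm_pos_iff.mpr hj1) 2
      have h2 : ‖z j1‖ ^ 2 ≤ ∑ j : Fin n, ‖z j‖ ^ 2 :=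
        Finset.single_le_sum (f := fun j => ‖z j‖ ^ 2)
          (fun j _ => by positivity) (Finset.mem_univ j1)
      linarith
    have hlog_sum : Real.log (∑ j : Fin n, ‖z j‖ ^ 2)
        ≤ Real.log n + 2 * Real.log M := by
      have := Real.log_le_log hsum_pos hsum_le
      rwa [Real.log_mul (ne_of_gt hnpos) (by positivity), Real.log_pow,
        Nat.cast_ofNat] at this
    -- RHS bound : a * log M ≤ log max
    obtain ⟨j0, hj0⟩ := Finite.exists_max fun j : Fin n => ‖z j‖
    have hMeq : M = ‖z j0‖ := le_antisymm (ciSup_le hj0) (hMle j0)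
    have hrhs : a * Real.log M ≤
        Real.log (max (⨆ i : {i : Fin n // (i : ℕ) < n - 1}, ‖z i.1‖)
          (‖z ⟨n - 1, by omega⟩‖ ^ a)) := by
      by_cases hc : (j0 : ℕ) < n - 1
      · have hbdd2 : BddAbove (Set.range fun i : {i : Fin n // (i : ℕ) < n - 1} =>
            ‖z i.1‖) := Set.Finite.bddAbove (Set.finite_range _)
        have hle : M ≤ ⨆ i : {i : Fin n // (i : ℕ) < n - 1}, ‖z i.1‖ := by
          rw [hMeq]
          exact le_ciSup hbdd2 ⟨j0, hc⟩
        have hlog : Real.log M ≤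
            Real.log (max (⨆ i : {i : Fin n // (i : ℕ) < n - 1}, ‖z i.1‖)
              (‖z ⟨n - 1, by omega⟩‖ ^ a)) :=
          Real.log_le_log hMpos (hle.trans (le_max_left _ _))
        nlinarith [hlog, hlogM]
      · have hj0eq : j0 = ⟨n - 1, by omega⟩ := by
          have := j0.isLt
          exact Fin.ext (by simp only [Fin.val_mk]; omega)
        have hMeq' : ‖z ⟨n - 1, by omega⟩‖ = M := by
          rw [hMeq]
          exact congrArg (fun j => ‖z j‖) hj0eq.symm
        have hle : M ^ a ≤ max (⨆ i : {i : Fin n // (i : ℕ) < n - 1}, ‖z i.1‖)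
            (‖z ⟨n - 1, by omega⟩‖ ^ a) := by
          rw [hMeq']; exact le_max_right _ _
        have hlog : Real.log (M ^ a) ≤
            Real.log (max (⨆ i : {i : Fin n // (i : ℕ) < n - 1}, ‖z i.1‖)
              (‖z ⟨n - 1, by omega⟩‖ ^ a)) :=
          Real.log_le_log (Real.rpow_pos_of_pos hMpos a) hle
        rwa [Real.log_rpow hMpos] at hlog
    have hlogn : Real.log n ≤ (n : ℝ) - 1 := Real.log_le_sub_one_of_pos hnpos
    nlinarith [hlog_sum, hrhs, hlogM, hlogn, mul_nonneg (le_of_lt (by linarith : (0:ℝ) < 12 - a)) (le_of_lt (neg_pos.mpr hlogM))]
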